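/- For a fixed finite partition P of Fin n into non-empty blocks, the number of absorbing states M : Fin n → Fin n → Bool whose characterization data has faction partition P (i.e. for which there exists a core set C meeting every block of P such that for all distinct i, j: M i j = true iff i, j lie in the same block of P and j ∈ C) equals the product over all blocks F of P of (2^{|F|} − 1). -/
import Mathlib


/-- A state `M` is absorbing if for all pairwise distinct agents `a z y`,
if `z` trusts `a` then `z` already agrees with `a` about `y`. -/
def Absorbing {n : ℕ} (M : Fin n → Fin n → Bool) : Prop :=
  ∀ a z y : Fin n, a ≠ z → a ≠ y → z ≠ y → M z a = true → M z y = M a y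

/-- For a fixed faction partition `P`, the number of absorbing states whose
characterization data has faction partition `P` equals `∏_{F ∈ P} (2^|F| - 1)`. -/
theorem card_absorbing_with_partition {n : ℕ}
    (P : Finpartition (Finset.univ : Finset (Fin n))) :
    Nat.card {M : Fin n → Fin n → Bool //
      (∀ i, M i i = false) ∧ Absorbing M ∧
      ∃ C : Finset (Fin n), (∀ F ∈ P.parts, (F ∩ C).Nonempty) ∧
        ∀ i j : Fin n, i ≠ j →
          (M i j = true ↔ (∃ F ∈ P.parts, i ∈ F ∧ j ∈ F) ∧ j ∈ C)} =
    ∏ F ∈ P.parts, (2 ^ F.card - 1) := by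
  classical
  have step1 : Nat.card {M : Fin n → Fin n → Bool //
      (∀ i, M i i = false) ∧ Absorbing M ∧
      ∃ C : Finset (Fin n), (∀ F ∈ P.parts, (F ∩ C).Nonempty) ∧
        ∀ i j : Fin n, i ≠ j →
          (M i j = true ↔ (∃ F ∈ P.parts, i ∈ F ∧ j ∈ F) ∧ j ∈ C)} =
      Nat.card {C : Finset (Fin n) // ∀ F ∈ P.parts, (F ∩ C).Nonempty} := by
    refine (Nat.card_eq_of_bijective
      (f := fun C : {C : Finset (Fin n) // ∀ F ∈ P.parts, (F ∩ C).Nonempty} =>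
        (⟨fun i j => decide (i ≠ j ∧ (∃ F ∈ P.parts, i ∈ F ∧ j ∈ F) ∧ j ∈ C.1),
          ?_, ?_, C.1, C.2, ?_⟩ : {M : Fin n → Fin n → Bool //
            (∀ i, M i i = false) ∧ Absorbing M ∧
            ∃ C : Finset (Fin n), (∀ F ∈ P.parts, (F ∩ C).Nonempty) ∧
              ∀ i j : Fin n, i ≠ j →
                (M i j = true ↔ (∃ F ∈ P.parts, i ∈ F ∧ j ∈ F) ∧ j ∈ C)}))
      ⟨?_, ?_⟩).symm
    · intro i; simp
    · intro a z y haz hay hzy h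
      rw [decide_eq_true_eq] at h
      obtain ⟨hza, ⟨F, hF, hzF, haF⟩, haC⟩ := h
      rw [Bool.eq_iff_iff, decide_eq_true_eq, decide_eq_true_eq]
      constructor
      · rintro ⟨_, ⟨F', hF', hzF', hyF'⟩, hyC⟩
        have : F = F' := P.eq_of_mem_parts hF hF' hzF hzF'
        subst this
        exact ⟨hay, ⟨F, hF, haF, hyF'⟩, hyC⟩
      · rintro ⟨_, ⟨F', hF', haF', hyF'⟩, hyC⟩
        have : F = F' := P.eq_of_mem_parts hF hF' haF haF'
        subst this
        exact ⟨hzy, ⟨F, hF, hzF, hyF'⟩, hyC⟩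
    · intro i j hij
      simp [hij]
    · -- injectivity
      rintro ⟨C, hC⟩ ⟨C', hC'⟩ h
      have hfun := congrArg Subtype.val h
      simp only at hfun
      apply Subtype.ext
      ext x
      obtain ⟨F, hF, hxF⟩ := P.exists_mem (Finset.mem_univ x)
      by_cases hs : ∃ i ∈ F, i ≠ x
      · obtain ⟨i, hiF, hix⟩ := hs
        have h1 := congrFun (congrFun hfun i) x
        rw [Bool.eq_iff_iff, decide_eq_true_eq, decide_eq_true_eq] at h1
        have hsame : ∃ F ∈ P.parts, i ∈ F ∧ x ∈ F := ⟨F, hF, hiF, hxF⟩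
        exact ⟨fun h => (h1.1 ⟨hix, hsame, h⟩).2.2, fun h => (h1.2 ⟨hix, hsame, h⟩).2.2⟩
      · push_neg at hs
        obtain ⟨y, hy⟩ := hC F hF
        obtain ⟨y', hy'⟩ := hC' F hF
        rw [Finset.mem_inter] at hy hy'
        have : y = x := hs y hy.1
        have h2 : y' = x := hs y' hy'.1
        simp only [this ▸ hy.2, h2 ▸ hy'.2]
    · -- surjectivity
      rintro ⟨M, hd, habs, C, hC, hspec⟩
      refine ⟨⟨C, hC⟩, ?_⟩
      apply Subtype.ext
      funext i j
      by_cases hij : i = j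
      · subst hij; simp [hd i]
      · rw [Bool.eq_iff_iff, decide_eq_true_eq]
        simp only [hij, ne_eq, not_false_eq_true, true_and]
        exact (hspec i j hij).symm
  rw [step1, Nat.card_eq_fintype_card, Fintype.card_subtype]
  have key : (Finset.filter (fun C : Finset (Fin n) => ∀ F ∈ P.parts, (F ∩ C).Nonempty)
      Finset.univ).card = (P.parts.pi (fun F => F.powerset.erase ∅)).card := by
    refine Finset.card_bij' (fun C _ => fun F _ => F ∩ C)
      (fun g hg => P.parts.attach.biUnion (fun F => g F.1 F.2)) ?_ ?_ ?_ ?_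
    · intro C hC
      rw [Finset.mem_filter] at hC
      rw [Finset.mem_pi]
      intro F hF
      rw [Finset.mem_erase, Finset.mem_powerset]
      exact ⟨(hC.2 F hF).ne_empty, Finset.inter_subset_left⟩
    · intro g hg
      rw [Finset.mem_pi] at hg
      rw [Finset.mem_filter]
      refine ⟨Finset.mem_univ _, fun F hF => ?_⟩
      have h1 := hg F hF
      rw [Finset.mem_erase, Finset.mem_powerset] at h1
      obtain ⟨x, hx⟩ := Finset.nonempty_iff_ne_empty.2 h1.1
      exact ⟨x, Finset.mem_inter.2 ⟨h1.2 hx,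
        Finset.mem_biUnion.2 ⟨⟨F, hF⟩, Finset.mem_attach _ _, hx⟩⟩⟩
    · intro C hC
      ext x
      rw [Finset.mem_biUnion]
      constructor
      · rintro ⟨F, _, hx⟩
        exact (Finset.mem_inter.1 hx).2
      · intro hx
        obtain ⟨F, hF, hxF⟩ := P.exists_mem (Finset.mem_univ x)
        exact ⟨⟨F, hF⟩, Finset.mem_attach _ _, Finset.mem_inter.2 ⟨hxF, hx⟩⟩
    · intro g hg
      rw [Finset.mem_pi] at hg
      funext F hF
      ext x
      rw [Finset.mem_inter, Finset.mem_biUnion]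
      constructor
      · rintro ⟨hxF, ⟨F', _, hxg⟩⟩
        have h1 := hg F'.1 F'.2
        rw [Finset.mem_erase, Finset.mem_powerset] at h1
        have hxF' : x ∈ F'.1 := h1.2 hxg
        have : F = F'.1 := P.eq_of_mem_parts hF F'.2 hxF hxF'
        obtain ⟨F', hF'⟩ := F'
        simp only at this
        subst this
        exact hxg
      · intro hx
        have h1 := hg F hF
        rw [Finset.mem_erase, Finset.mem_powerset] at h1
        exact ⟨h1.2 hx, ⟨⟨F, hF⟩, Finset.mem_attach _ _, hx⟩⟩
  rw [key, Finset.card_pi]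
  refine Finset.prod_congr rfl fun F _ => ?_
  rw [Finset.card_erase_of_mem (Finset.empty_mem_powerset F), Finset.card_powerset]
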